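/- Let a₁, …, a_m > 0 be real numbers, let b_k := c_k(1,1) denote the ball capacity sequence, and for each k ∈ ℕ define C_k := max{ Σ_{i=1}^m a_i · b_{k_i} : (k₁,…,k_m) ∈ ℕ^m, k₁ + ⋯ + k_m = k } (the ECH capacities of a disjoint union of balls B_4(a₁) ⊔ ⋯ ⊔ B_4(a_m), computed via the disjoint union formula). Then lim_{k→∞} C_k²/k = 2(a₁² + ⋯ + a_m²). (This is the ECH Weyl law for disjoint unions of balls; note that 2Σa_i² equals 2∫ω∧ω for this disjoint union.) -/

import Mathlib

/-- `latN a b T` is the number of lattice points `(x,y) ∈ ℕ × ℕ` with `a·x + b·y ≤ T`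
(a finite set when `a, b > 0`). -/
noncomputable def latN (a b T : ℝ) : ℕ :=
  Set.ncard {p : ℕ × ℕ | a * p.1 + b * p.2 ≤ T}

/-- `ck a b k` is the `(k+1)`-st smallest element, counted with multiplicity, of the
collection `{a·m + b·n : (m,n) ∈ ℕ × ℕ}`; these are the ECH capacities of the ellipsoid
`E(a,b)`. -/
noncomputable def ck (a b : ℝ) (k : ℕ) : ℝ :=
  sInf {T : ℝ | 0 ≤ T ∧ k + 1 ≤ latN a b T}

lemma latN_nat (n : ℕ) : latN 1 1 (n : ℝ) * 2 = (n + 1) * (n + 2) := by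
  have hset : {p : ℕ × ℕ | (1:ℝ) * p.1 + 1 * p.2 ≤ (n:ℝ)} =
      ↑((Finset.range (n+1)).biUnion fun j => Finset.HasAntidiagonal.antidiagonal j) := by
    ext ⟨x, y⟩
    simp only [Set.mem_setOf_eq, one_mul, Finset.coe_biUnion, Set.mem_iUnion,
      Finset.mem_coe, Finset.mem_biUnion, Finset.mem_range, Finset.HasAntidiagonal.mem_antidiagonal]
    constructor
    · intro h
      have h1 : ((x + y : ℕ) : ℝ) ≤ (n : ℝ) := by push_cast; linarith
      have h2 : x + y ≤ n := Nat.cast_le.mp h1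
      exact ⟨x + y, by omega, rfl⟩
    · rintro ⟨j, hj, rfl⟩
      have : ((x + y : ℕ) : ℝ) ≤ (n : ℝ) := Nat.cast_le.mpr (by omega)
      push_cast at this; linarith
  rw [latN, hset, Set.ncard_coe_finset, Finset.card_biUnion]
  · simp only [Finset.Nat.card_antidiagonal]
    rw [Finset.sum_add_distrib, Finset.sum_const, Finset.card_range, smul_eq_mul, mul_one]
    have h := Finset.sum_range_id_mul_two (n + 1)
    have h2 : (n + 1) * (n + 2) = (n + 1) * n + (n + 1) * 2 := by ring
    simp only [Nat.add_sub_cancel] at h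
    rw [h2, ← h]; ring
  · intro x _ y _ hxy
    simp only [Finset.disjoint_left, Finset.HasAntidiagonal.mem_antidiagonal]
    intro p hp hq
    exact hxy (by omega)

lemma latN_floor (T : ℝ) (hT : 0 ≤ T) : latN 1 1 T = latN 1 1 (⌊T⌋₊ : ℝ) := by
  have hset : {p : ℕ × ℕ | (1:ℝ) * p.1 + 1 * p.2 ≤ T} =
      {p : ℕ × ℕ | (1:ℝ) * p.1 + 1 * p.2 ≤ (⌊T⌋₊ : ℝ)} := by
    ext ⟨x, y⟩
    simp only [Set.mem_setOf_eq, one_mul]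
    constructor
    · intro h
      have hx : ((x + y : ℕ) : ℝ) ≤ T := by push_cast; linarith
      have h2 : x + y ≤ ⌊T⌋₊ := Nat.le_floor hx
      have h3 : ((x + y : ℕ) : ℝ) ≤ (⌊T⌋₊ : ℝ) := Nat.cast_le.mpr h2
      push_cast at h3; linarith
    · intro h
      have h2 : (⌊T⌋₊ : ℝ) ≤ T := Nat.floor_le hT
      linarith
  rw [latN, latN, hset]

lemma bseq_ex (k : ℕ) : ∃ d : ℕ, 2 * k < (d + 1) * (d + 2) := ⟨2 * k, by nlinarith⟩

/-- The ball capacity sequence `b_k = c_k(1,1)` as a natural number. -/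
noncomputable def bseq (k : ℕ) : ℕ := Nat.find (bseq_ex k)

lemma bseq_lt (k : ℕ) : 2 * k < (bseq k + 1) * (bseq k + 2) := Nat.find_spec (bseq_ex k)

lemma bseq_le (k : ℕ) : bseq k * (bseq k + 1) ≤ 2 * k := by
  rcases Nat.eq_zero_or_pos (bseq k) with h | h
  · simp [h]
  · have hmin := Nat.find_min (bseq_ex k) (show bseq k - 1 < bseq k by omega)
    have h1 : bseq k - 1 + 1 = bseq k := by omega
    have h2 : bseq k - 1 + 2 = bseq k + 1 := by omega
    rw [h1, h2] at hmin
    omega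

lemma ck_one_one (k : ℕ) : ck 1 1 k = (bseq k : ℝ) := by
  have hset : {T : ℝ | 0 ≤ T ∧ k + 1 ≤ latN 1 1 T} = Set.Ici (bseq k : ℝ) := by
    ext T
    simp only [Set.mem_setOf_eq, Set.mem_Ici]
    constructor
    · rintro ⟨hT0, hk⟩
      have h1 := latN_floor T hT0
      have h2 := latN_nat ⌊T⌋₊
      have h3 : (k + 1) * 2 ≤ latN 1 1 (⌊T⌋₊ : ℝ) * 2 := by
        rw [← h1]; omega
      rw [h2] at h3
      have h4 : 2 * k < (⌊T⌋₊ + 1) * (⌊T⌋₊ + 2) := by omega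
      have h5 : bseq k ≤ ⌊T⌋₊ := by
        by_contra hcon
        push_neg at hcon
        exact Nat.find_min (bseq_ex k) hcon h4
      calc (bseq k : ℝ) ≤ (⌊T⌋₊ : ℝ) := Nat.cast_le.mpr h5
        _ ≤ T := Nat.floor_le hT0
    · intro hT
      have hT0 : 0 ≤ T := le_trans (Nat.cast_nonneg _) hT
      refine ⟨hT0, ?_⟩
      rw [latN_floor T hT0]
      have hb : bseq k ≤ ⌊T⌋₊ := Nat.le_floor hT
      have h2 := latN_nat ⌊T⌋₊
      have hmono : (bseq k + 1) * (bseq k + 2) ≤ (⌊T⌋₊ + 1) * (⌊T⌋₊ + 2) :=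
        Nat.mul_le_mul (by omega) (by omega)
      have h3 := bseq_lt k
      have h4 : 2 * k < latN 1 1 (⌊T⌋₊ : ℝ) * 2 := by
        rw [h2]; omega
      omega
  rw [ck, hset, csInf_Ici]

lemma bseq_le_sqrt (k : ℕ) : (bseq k : ℝ) ≤ Real.sqrt (2 * k) := by
  have h1 : bseq k * bseq k ≤ 2 * k :=
    le_trans (Nat.mul_le_mul_left _ (Nat.le_succ _)) (bseq_le k)
  have h2 : (bseq k : ℝ) ^ 2 ≤ 2 * (k : ℝ) := by
    have : ((bseq k * bseq k : ℕ) : ℝ) ≤ ((2 * k : ℕ) : ℝ) := Nat.cast_le.mpr h1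
    push_cast at this; nlinarith
  calc (bseq k : ℝ) = Real.sqrt ((bseq k : ℝ) ^ 2) := (Real.sqrt_sq (Nat.cast_nonneg _)).symm
    _ ≤ Real.sqrt (2 * k) := Real.sqrt_le_sqrt h2

lemma sqrt_le_bseq (k : ℕ) : Real.sqrt (2 * k) ≤ (bseq k : ℝ) + 2 := by
  have h1 : 2 * k < (bseq k + 2) * (bseq k + 2) :=
    lt_of_lt_of_le (bseq_lt k) (Nat.mul_le_mul_right _ (by omega))
  have h2 : 2 * (k : ℝ) ≤ ((bseq k : ℝ) + 2) ^ 2 := by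
    have : ((2 * k : ℕ) : ℝ) ≤ (((bseq k + 2) * (bseq k + 2) : ℕ) : ℝ) := Nat.cast_le.mpr h1.le
    push_cast at this; nlinarith
  calc Real.sqrt (2 * k) ≤ Real.sqrt (((bseq k : ℝ) + 2) ^ 2) := Real.sqrt_le_sqrt h2
    _ = (bseq k : ℝ) + 2 := Real.sqrt_sq (by positivity)

lemma sqrt_add_le_aux (x y : ℝ) (hx : 0 ≤ x) (hy : 0 ≤ y) :
    Real.sqrt (x + y) ≤ Real.sqrt x + Real.sqrt y := by
  have h : x + y ≤ (Real.sqrt x + Real.sqrt y) ^ 2 := by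
    have hx' := Real.sq_sqrt hx
    have hy' := Real.sq_sqrt hy
    nlinarith [Real.sqrt_nonneg x, Real.sqrt_nonneg y]
  calc Real.sqrt (x + y) ≤ Real.sqrt ((Real.sqrt x + Real.sqrt y) ^ 2) := Real.sqrt_le_sqrt h
    _ = Real.sqrt x + Real.sqrt y := Real.sqrt_sq (by positivity)

lemma sqrt_tendsto_atTop : Filter.Tendsto Real.sqrt Filter.atTop Filter.atTop := by
  rw [Filter.tendsto_atTop_atTop]
  intro b
  refine ⟨b ^ 2, fun a ha => ?_⟩
  calc b ≤ |b| := le_abs_self b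
    _ = Real.sqrt (b ^ 2) := (Real.sqrt_sq_eq_abs b).symm
    _ ≤ Real.sqrt a := Real.sqrt_le_sqrt ha


/-- Auxiliary: the set of candidate capacity values. -/
def Eset (m : ℕ) (a : Fin m → ℝ) (k : ℕ) : Set ℝ :=
  {s : ℝ | ∃ κ : Fin m → ℕ, (∑ i, κ i) = k ∧ s = ∑ i, a i * ck 1 1 (κ i)}

lemma mem_Eset {m : ℕ} {a : Fin m → ℝ} {k : ℕ} {s : ℝ} :
    s ∈ Eset m a k ↔ ∃ κ : Fin m → ℕ, (∑ i, κ i) = k ∧ s = ∑ i, a i * ck 1 1 (κ i) := Iff.rfl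

/-- The ECH Weyl law for a disjoint union of balls `B_4(a₁) ⊔ ⋯ ⊔ B_4(a_m)`: with
`b_k := c_k(1,1)` the ball capacity sequence and
`C_k := max { Σ_i a_i·b_{k_i} : k₁ + ⋯ + k_m = k }` (the disjoint union formula for ECH
capacities), one has `lim_{k→∞} C_k²/k = 2(a₁² + ⋯ + a_m²)`. -/
theorem disjoint_union_of_balls_weyl_law (m : ℕ) (a : Fin m → ℝ) (ha : ∀ i, 0 < a i) :
    Filter.Tendsto
      (fun k : ℕ =>
        (sSup {s : ℝ | ∃ κ : Fin m → ℕ, (∑ i, κ i) = k ∧ s = ∑ i, a i * ck 1 1 (κ i)}) ^ 2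
          / (k : ℝ))
      Filter.atTop (nhds (2 * ∑ i, (a i) ^ 2)) := by
  classical
  rcases Nat.eq_zero_or_pos m with hm | hm
  · subst hm
    have hev : (fun _ : ℕ => (0:ℝ)) =ᶠ[Filter.atTop] (fun k : ℕ =>
        (sSup {s : ℝ | ∃ κ : Fin 0 → ℕ, (∑ i, κ i) = k ∧ s = ∑ i, a i * ck 1 1 (κ i)}) ^ 2
          / (k : ℝ)) := by
      filter_upwards [Filter.eventually_ge_atTop 1] with k hk
      have hempty : {s : ℝ | ∃ κ : Fin 0 → ℕ, (∑ i, κ i) = k ∧ s = ∑ i, a i * ck 1 1 (κ i)}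
          = ∅ := by
        ext s
        simp only [Set.mem_setOf_eq, Set.mem_empty_iff_false, iff_false, not_exists]
        intro κ
        simp only [Finset.univ_eq_empty, Finset.sum_empty]
        intro h
        omega
      rw [hempty, Real.sSup_empty]
      norm_num
    have h0 : (2 * ∑ i : Fin 0, (a i) ^ 2) = 0 := by simp
    rw [h0]
    exact Filter.Tendsto.congr' hev tendsto_const_nhds
  -- main case m ≥ 1
  set S : ℝ := ∑ i, (a i) ^ 2 with hS
  set i₀ : Fin m := ⟨0, hm⟩ with hi₀
  have hSpos : 0 < S := Finset.sum_pos (fun i _ => pow_pos (ha i) 2) ⟨i₀, Finset.mem_univ _⟩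
  have hanon : (0:ℝ) ≤ ∑ i, a i := Finset.sum_nonneg fun i _ => (ha i).le
  set C₀ : ℝ := (2 + Real.sqrt 2) * ∑ i, a i with hC₀
  have hC₀0 : 0 ≤ C₀ := by
    have h2 : (0:ℝ) ≤ Real.sqrt 2 := Real.sqrt_nonneg 2
    have : (0:ℝ) ≤ 2 + Real.sqrt 2 := by linarith
    exact mul_nonneg this hanon
  show Filter.Tendsto (fun k : ℕ => (sSup (Eset m a k)) ^ 2 / (k : ℝ)) Filter.atTop (nhds (2 * S))
  -- upper bound
  have hub : ∀ k : ℕ, ∀ s ∈ Eset m a k, s ≤ Real.sqrt (2 * k * S) := by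
    intro k s hs
    rw [mem_Eset] at hs
    obtain ⟨κ, hκ, rfl⟩ := hs
    have h1 : ∑ i, a i * ck 1 1 (κ i) ≤ ∑ i, a i * Real.sqrt (2 * (κ i : ℝ)) := by
      refine Finset.sum_le_sum fun i _ => ?_
      refine mul_le_mul_of_nonneg_left ?_ (ha i).le
      rw [ck_one_one]
      exact bseq_le_sqrt (κ i)
    have h2 : (∑ i, a i * Real.sqrt (2 * (κ i : ℝ))) ^ 2 ≤ S * (2 * k) := by
      calc (∑ i, a i * Real.sqrt (2 * (κ i : ℝ))) ^ 2
          ≤ (∑ i, (a i) ^ 2) * ∑ i, (Real.sqrt (2 * (κ i : ℝ))) ^ 2 :=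
            Finset.sum_mul_sq_le_sq_mul_sq _ _ _
        _ = S * (2 * k) := by
            rw [← hS]
            congr 1
            have hκi : ∀ i ∈ (Finset.univ : Finset (Fin m)),
                (Real.sqrt (2 * (κ i : ℝ))) ^ 2 = 2 * (κ i : ℝ) :=
              fun i _ => Real.sq_sqrt (by positivity)
            rw [Finset.sum_congr rfl hκi, ← Finset.mul_sum, ← Nat.cast_sum, hκ]
    have h3 : ∑ i, a i * Real.sqrt (2 * (κ i : ℝ)) ≤ Real.sqrt (S * (2 * k)) := by
      have hnn : 0 ≤ ∑ i, a i * Real.sqrt (2 * (κ i : ℝ)) :=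
        Finset.sum_nonneg fun i _ => mul_nonneg (ha i).le (Real.sqrt_nonneg _)
      calc ∑ i, a i * Real.sqrt (2 * (κ i : ℝ))
          = Real.sqrt ((∑ i, a i * Real.sqrt (2 * (κ i : ℝ))) ^ 2) := (Real.sqrt_sq hnn).symm
        _ ≤ Real.sqrt (S * (2 * k)) := Real.sqrt_le_sqrt h2
    have h4 : Real.sqrt (S * (2 * k)) = Real.sqrt (2 * k * S) := by ring_nf
    linarith [h3, h1, h4.le, h4.ge]
  have hbdd : ∀ k : ℕ, BddAbove (Eset m a k) := fun k => ⟨Real.sqrt (2 * k * S), fun s hs => hub k s hs⟩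
  have hmem0 : ∀ k : ℕ, ∃ s ∈ Eset m a k, (0:ℝ) ≤ s := by
    intro k
    refine ⟨∑ i, a i * ck 1 1 (if i = i₀ then k else 0),
      mem_Eset.mpr ⟨(fun j => if j = i₀ then k else 0), ?_, rfl⟩, ?_⟩
    · rw [Finset.sum_ite_eq' Finset.univ i₀ fun _ => k]
      simp
    · refine Finset.sum_nonneg fun i _ => mul_nonneg (ha i).le ?_
      rw [ck_one_one]
      exact Nat.cast_nonneg _
  have hEne : ∀ k : ℕ, (Eset m a k).Nonempty := fun k => by
    obtain ⟨s, hs, _⟩ := hmem0 k; exact ⟨s, hs⟩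
  have hf0 : ∀ k : ℕ, 0 ≤ sSup (Eset m a k) := fun k => by
    obtain ⟨s, hs, h0⟩ := hmem0 k
    exact h0.trans (le_csSup (hbdd k) hs)
  -- lower bound
  have hlb : ∀ k : ℕ, Real.sqrt (2 * k * S) - C₀ ≤ sSup (Eset m a k) := by
    intro k
    set t : Fin m → ℝ := fun i => (a i) ^ 2 * k / S with ht
    have ht0 : ∀ i, 0 ≤ t i := fun i => by positivity
    have htsum : ∑ i, t i = (k : ℝ) := by
      rw [ht, ← Finset.sum_div, ← Finset.sum_mul, ← hS]
      field_simp
    set n : Fin m → ℕ := fun i => ⌊t i⌋₊ with hn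
    have hnle : (∑ i, n i) ≤ k := by
      have hcast : ((∑ i, n i : ℕ) : ℝ) ≤ ∑ i, t i := by
        push_cast
        exact Finset.sum_le_sum fun i _ => Nat.floor_le (ht0 i)
      rw [htsum] at hcast
      exact_mod_cast hcast
    set κ : Fin m → ℕ := fun i => n i + (if i = i₀ then k - ∑ j, n j else 0) with hκdef
    have hκsum : (∑ i, κ i) = k := by
      rw [hκdef, Finset.sum_add_distrib, Finset.sum_ite_eq' Finset.univ i₀ fun _ => k - ∑ j, n j]
      simp only [Finset.mem_univ, if_true]
      omega
    have hκge : ∀ i, t i - 1 ≤ (κ i : ℝ) := by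
      intro i
      have h1 : t i < (n i : ℝ) + 1 := Nat.lt_floor_add_one (t i)
      have h2 : (n i : ℝ) ≤ (κ i : ℝ) := Nat.cast_le.mpr (Nat.le_add_right _ _)
      linarith
    have hmemE : (∑ i, a i * ck 1 1 (κ i)) ∈ Eset m a k := mem_Eset.mpr ⟨κ, hκsum, rfl⟩
    have key : ∀ i, a i * (Real.sqrt (2 * t i) - (2 + Real.sqrt 2)) ≤ a i * ck 1 1 (κ i) := by
      intro i
      refine mul_le_mul_of_nonneg_left ?_ (ha i).le
      rw [ck_one_one]
      have h1 : Real.sqrt (2 * t i) ≤ Real.sqrt (2 * (κ i : ℝ)) + Real.sqrt 2 := by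
        have h2 : 2 * t i ≤ 2 * (κ i : ℝ) + 2 := by have := hκge i; linarith
        calc Real.sqrt (2 * t i) ≤ Real.sqrt (2 * (κ i : ℝ) + 2) := Real.sqrt_le_sqrt h2
          _ ≤ Real.sqrt (2 * (κ i : ℝ)) + Real.sqrt 2 :=
            sqrt_add_le_aux _ _ (by positivity) (by norm_num)
      have h3 := sqrt_le_bseq (κ i)
      linarith
    have hsum : ∑ i, a i * (Real.sqrt (2 * t i) - (2 + Real.sqrt 2))
        ≤ ∑ i, a i * ck 1 1 (κ i) := Finset.sum_le_sum fun i _ => key i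
    have hsq : ∀ i, Real.sqrt (2 * t i) = a i * Real.sqrt (2 * k / S) := by
      intro i
      rw [show 2 * t i = (a i) ^ 2 * (2 * k / S) by rw [ht]; ring,
        Real.sqrt_mul (sq_nonneg _), Real.sqrt_sq (ha i).le]
    have hSsqrt : Real.sqrt (2 * k * S) = Real.sqrt (2 * k / S) * S := by
      rw [show 2 * (k:ℝ) * S = (2 * k / S) * S ^ 2 by field_simp,
        Real.sqrt_mul (by positivity), Real.sqrt_sq hSpos.le]
    have hval : ∑ i, a i * (Real.sqrt (2 * t i) - (2 + Real.sqrt 2))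
        = Real.sqrt (2 * k * S) - C₀ := by
      have hstep : ∀ i ∈ (Finset.univ : Finset (Fin m)),
          a i * (Real.sqrt (2 * t i) - (2 + Real.sqrt 2))
            = (a i) ^ 2 * Real.sqrt (2 * k / S) - (2 + Real.sqrt 2) * a i := by
        intro i _
        rw [hsq i]; ring
      rw [Finset.sum_congr rfl hstep, Finset.sum_sub_distrib, ← Finset.sum_mul,
        ← Finset.mul_sum, ← hS, ← hC₀, hSsqrt]
      ring
    calc Real.sqrt (2 * k * S) - C₀ = ∑ i, a i * (Real.sqrt (2 * t i) - (2 + Real.sqrt 2)) :=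
          hval.symm
      _ ≤ ∑ i, a i * ck 1 1 (κ i) := hsum
      _ ≤ sSup (Eset m a k) := le_csSup (hbdd k) hmemE
  -- limit via squeeze
  have hsqrtk : Filter.Tendsto (fun k : ℕ => Real.sqrt (k : ℝ)) Filter.atTop Filter.atTop :=
    sqrt_tendsto_atTop.comp tendsto_natCast_atTop_atTop
  have hL : Filter.Tendsto
      (fun k : ℕ => 2 * S - (2 * C₀ * Real.sqrt (2 * S)) * (Real.sqrt (k : ℝ))⁻¹)
      Filter.atTop (nhds (2 * S)) := by
    have h0 : Filter.Tendsto (fun k : ℕ => (Real.sqrt (k : ℝ))⁻¹) Filter.atTop (nhds 0) :=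
      hsqrtk.inv_tendsto_atTop
    have h1 := Filter.Tendsto.const_mul (2 * C₀ * Real.sqrt (2 * S)) h0
    have h2 := (tendsto_const_nhds :
      Filter.Tendsto (fun _ : ℕ => 2 * S) Filter.atTop (nhds (2 * S))).sub h1
    simpa using h2
  have htop : Filter.Tendsto (fun k : ℕ => Real.sqrt (2 * k * S)) Filter.atTop Filter.atTop := by
    have h1 : Filter.Tendsto (fun k : ℕ => 2 * (k : ℝ) * S) Filter.atTop Filter.atTop := by
      apply Filter.Tendsto.atTop_mul_const hSpos
      exact Filter.Tendsto.const_mul_atTop two_pos tendsto_natCast_atTop_atTop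
    exact sqrt_tendsto_atTop.comp h1
  have hev1 : ∀ᶠ k : ℕ in Filter.atTop, (sSup (Eset m a k)) ^ 2 / (k : ℝ) ≤ 2 * S := by
    filter_upwards [Filter.eventually_ge_atTop 1] with k hk
    have hk0 : (0:ℝ) < k := by exact_mod_cast hk
    have h1 : sSup (Eset m a k) ≤ Real.sqrt (2 * k * S) := csSup_le (hEne k) (hub k)
    have h2 : (sSup (Eset m a k)) ^ 2 ≤ 2 * k * S := by
      have hnn := hf0 k
      nlinarith [Real.sq_sqrt (show (0:ℝ) ≤ 2 * k * S by positivity)]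
    rw [div_le_iff₀ hk0]
    nlinarith
  have hev2 : ∀ᶠ k : ℕ in Filter.atTop,
      2 * S - (2 * C₀ * Real.sqrt (2 * S)) * (Real.sqrt (k : ℝ))⁻¹ ≤ (sSup (Eset m a k)) ^ 2 / (k : ℝ) := by
    filter_upwards [Filter.eventually_ge_atTop 1, htop.eventually_ge_atTop C₀] with k hk hCk
    have hk0 : (0:ℝ) < k := by exact_mod_cast hk
    have hsk : (0:ℝ) < Real.sqrt (k : ℝ) := Real.sqrt_pos.mpr hk0
    have hkk : Real.sqrt (k : ℝ) * Real.sqrt (k : ℝ) = (k : ℝ) := Real.mul_self_sqrt hk0.le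
    have h1 : Real.sqrt (2 * k * S) - C₀ ≤ sSup (Eset m a k) := hlb k
    have h2 : 0 ≤ Real.sqrt (2 * k * S) - C₀ := by linarith
    have h3 : (Real.sqrt (2 * k * S) - C₀) ^ 2 ≤ (sSup (Eset m a k)) ^ 2 := by nlinarith
    have hsqm : Real.sqrt (2 * k * S) = Real.sqrt (2 * S) * Real.sqrt (k : ℝ) := by
      rw [show 2 * (k:ℝ) * S = (2 * S) * k by ring, Real.sqrt_mul (by positivity)]
    have h2S : Real.sqrt (2 * S) * Real.sqrt (2 * S) = 2 * S :=
      Real.mul_self_sqrt (by positivity)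
    have expand : (Real.sqrt (2 * k * S) - C₀) ^ 2
        = 2 * S * k - 2 * C₀ * Real.sqrt (2 * S) * Real.sqrt (k : ℝ) + C₀ ^ 2 := by
      rw [hsqm]
      have hr : (Real.sqrt (2 * S) * Real.sqrt (k : ℝ) - C₀) ^ 2
          = (Real.sqrt (2 * S) * Real.sqrt (2 * S)) * (Real.sqrt (k : ℝ) * Real.sqrt (k : ℝ))
            - 2 * C₀ * Real.sqrt (2 * S) * Real.sqrt (k : ℝ) + C₀ ^ 2 := by ring
      rw [hr, hkk, h2S]
    have hinv : (Real.sqrt (k : ℝ))⁻¹ * (k : ℝ) = Real.sqrt (k : ℝ) := by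
      rw [← hkk]
      field_simp
      rw [Real.sqrt_sq (Real.sqrt_nonneg _)]
    rw [le_div_iff₀ hk0]
    have lhs_eq : (2 * S - (2 * C₀ * Real.sqrt (2 * S)) * (Real.sqrt (k : ℝ))⁻¹) * (k : ℝ)
        = 2 * S * k - 2 * C₀ * Real.sqrt (2 * S) * Real.sqrt (k : ℝ) := by
      calc (2 * S - (2 * C₀ * Real.sqrt (2 * S)) * (Real.sqrt (k : ℝ))⁻¹) * (k : ℝ)
          = 2 * S * k - (2 * C₀ * Real.sqrt (2 * S)) * ((Real.sqrt (k : ℝ))⁻¹ * (k : ℝ)) := by ring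
        _ = 2 * S * k - 2 * C₀ * Real.sqrt (2 * S) * Real.sqrt (k : ℝ) := by rw [hinv]
    rw [lhs_eq]
    nlinarith [sq_nonneg C₀]
  exact tendsto_of_tendsto_of_tendsto_of_le_of_le' hL tendsto_const_nhds hev2 hev1
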